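/- Let (h_n)_{n∈ℕ} be a sequence of nonnegative reals and (p_n)_{n∈ℕ} a sequence in [0,1]. Suppose that for some k ∈ ℕ the following hold for all n ≥ k: p_{n+1} ≤ 100·l_n·(p_n² + h_n) and 100·(l_n^{-1} + l_n^{7}·h_n) ≤ 1. If p_k ≤ l_k^{-4}, then p_n ≤ l_n^{-4} for all n ≥ k. -/

import Mathlib

/-- The sequence of scales: `l 0 = 10^100`, `l (k+1) = ⌊l k ^ (1/2)⌋ * l k`. -/
def scaleL : ℕ → ℕ
  | 0 => 10 ^ 100
  | k + 1 => Nat.sqrt (scaleL k) * scaleL k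

lemma scaleL_pos (n : ℕ) : 0 < scaleL n := by
  induction n with
  | zero => simp [scaleL]
  | succ n ih => exact Nat.mul_pos (Nat.sqrt_pos.mpr ih) ih

/-- If `p (n+1) ≤ 100 * l n * (p n ^ 2 + h n)` and `100 * (l n⁻¹ + l n ^ 7 * h n) ≤ 1`
for all `n ≥ k`, and `p k ≤ l k ^ (-4)`, then `p n ≤ l n ^ (-4)` for all `n ≥ k`. -/
theorem stmt_2 (h p : ℕ → ℝ) (hh : ∀ n, 0 ≤ h n) (hp : ∀ n, p n ∈ Set.Icc (0 : ℝ) 1)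
    (k : ℕ)
    (hrec : ∀ n, k ≤ n → p (n + 1) ≤ 100 * (scaleL n : ℝ) * ((p n) ^ 2 + h n))
    (hsmall : ∀ n, k ≤ n → 100 * ((scaleL n : ℝ)⁻¹ + (scaleL n : ℝ) ^ 7 * h n) ≤ 1)
    (hk : p k ≤ (scaleL k : ℝ)⁻¹ ^ 4) :
    ∀ n, k ≤ n → p n ≤ (scaleL n : ℝ)⁻¹ ^ 4 := by
  intro n hn
  induction n, hn using Nat.le_induction with
  | base => exact hk
  | succ n hn ih =>
    set L : ℝ := (scaleL n : ℝ) with hL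
    have hLpos : (0:ℝ) < L := by rw [hL]; exact_mod_cast scaleL_pos n
    have hLne : L ≠ 0 := ne_of_gt hLpos
    have hpn0 : 0 ≤ p n := (hp n).1
    -- step 1 : p (n+1) ≤ L⁻¹ ^ 6
    have hsq : p n ^ 2 ≤ (L⁻¹ ^ 4) ^ 2 := by
      exact pow_le_pow_left₀ hpn0 ih 2
    have hstep : p (n + 1) ≤ L⁻¹ ^ 6 := by
      have h1 := hrec n hn
      have h2 := hsmall n hn
      have hLinv : 0 < L⁻¹ := inv_pos.mpr hLpos
      have hmul : L * L⁻¹ = 1 := mul_inv_cancel₀ hLne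
      have h3 : 100 * L * (p n ^ 2 + h n) ≤ 100 * L * ((L⁻¹ ^ 4) ^ 2 + h n) := by
        have := add_le_add_left hsq (h n)
        exact mul_le_mul_of_nonneg_left this (by positivity)
      have h4 : 100 * L * ((L⁻¹ ^ 4) ^ 2 + h n)
          = 100 * L⁻¹ ^ 7 + L⁻¹ ^ 6 * (100 * L ^ 7 * h n) := by
        field_simp
      have h5 : 100 * L ^ 7 * h n ≤ 1 - 100 * L⁻¹ := by nlinarith [h2]
      have h6 : L⁻¹ ^ 6 * (100 * L ^ 7 * h n) ≤ L⁻¹ ^ 6 * (1 - 100 * L⁻¹) :=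
        mul_le_mul_of_nonneg_left h5 (by positivity)
      have h7 : 100 * L⁻¹ ^ 7 + L⁻¹ ^ 6 * (1 - 100 * L⁻¹) = L⁻¹ ^ 6 := by ring
      calc p (n + 1) ≤ 100 * L * (p n ^ 2 + h n) := h1
        _ ≤ 100 * L * ((L⁻¹ ^ 4) ^ 2 + h n) := h3
        _ = 100 * L⁻¹ ^ 7 + L⁻¹ ^ 6 * (100 * L ^ 7 * h n) := h4
        _ ≤ 100 * L⁻¹ ^ 7 + L⁻¹ ^ 6 * (1 - 100 * L⁻¹) := by linarith [h6]
        _ = L⁻¹ ^ 6 := h7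
    -- step 2 : L⁻¹ ^ 6 ≤ (scaleL (n+1))⁻¹ ^ 4
    have hcast : ((scaleL (n + 1) : ℕ) : ℝ) = (Nat.sqrt (scaleL n) : ℝ) * L := by
      simp [scaleL, hL]
    set S : ℝ := (Nat.sqrt (scaleL n) : ℝ) with hS
    have hSpos : (0:ℝ) < S := by
      rw [hS]; exact_mod_cast Nat.sqrt_pos.mpr (scaleL_pos n)
    have hS2 : S ^ 2 ≤ L := by
      rw [hS, hL]
      exact_mod_cast Nat.sqrt_le' (scaleL n)
    have hfin : L⁻¹ ^ 6 ≤ ((S * L)⁻¹) ^ 4 := by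
      rw [inv_pow, inv_pow]
      apply inv_anti₀ (by positivity)
      calc (S * L) ^ 4 = (S ^ 2) ^ 2 * L ^ 4 := by ring
        _ ≤ L ^ 2 * L ^ 4 := by
            apply mul_le_mul_of_nonneg_right _ (by positivity)
            exact pow_le_pow_left₀ (by positivity) hS2 2
        _ = L ^ 6 := by ring
    rw [hcast]
    exact hstep.trans hfin
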